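/- arXiv:1702.01257 — 3 statements merged into one kernel-verified Lean document; each statement's English description precedes it below -/
import Mathlib

section
/- Suppose D is a symmetric (v, k, λ) design admitting a flag-transitive and point-primitive almost simple automorphism group G with socle X, where X is a finite simple group of Lie type in characteristic p. Suppose the point-stabiliser G_α does not contain X and is not a parabolic subgroup of G. Then gcd(p, v−1) = 1. -/
namespace Paper

/-! ### Group-theoretic preliminaries -/

/-- A minimal normal subgroup of a group. -/
def IsMinimalNormal {G : Type*} [Group G] (N : Subgroup G) : Prop :=
  N.Normal ∧ N ≠ ⊥ ∧ ∀ M : Subgroup G, M.Normal → M ≠ ⊥ → M ≤ N → M = N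

/-- The socle of a group: the subgroup generated by all minimal normal subgroups. -/
def socle (G : Type*) [Group G] : Subgroup G :=
  ⨆ N ∈ {N : Subgroup G | IsMinimalNormal N}, N

/-- `G` is almost simple with socle the (nonabelian simple) subgroup `X`. -/
def IsAlmostSimpleWithSocle (G : Type*) [Group G] (X : Subgroup G) : Prop :=
  socle G = X ∧ IsSimpleGroup X ∧ ∃ x y : X, x * y ≠ y * x

/-- The order of the outer automorphism group `Out(X) = Aut(X)/Inn(X)`. -/
noncomputable def outCard (X : Type*) [Group X] : ℕ :=
  Nat.card (MulAut X) / Nat.card (MulAut.conj : X →* MulAut X).range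

/-- A subgroup of a finite group of Lie type in characteristic `p` is parabolic iff it
contains a Sylow `p`-subgroup (by the Borel–Tits theorem); we use this characterization. -/
def IsParabolic (p : ℕ) {X : Type*} [Group X] (P : Subgroup X) : Prop :=
  ∃ Q : Sylow p X, (Q : Subgroup X) ≤ P

/-! ### Designs -/

/-- `I` is the incidence relation of a symmetric `(v, k, λ)` design: there are `v` points,
`v` blocks, every block is incident with exactly `k` points, and any two distinct points
are incident with exactly `λ` common blocks. -/
structure IsSymmetricDesign {P B : Type*} (I : P → B → Prop) (v k lam : ℕ) : Prop where
  card_points : Nat.card P = v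
  card_blocks : Nat.card B = v
  card_block : ∀ b : B, Nat.card {x : P // I x b} = k
  card_pair : ∀ x y : P, x ≠ y → Nat.card {b : B // I x b ∧ I y b} = lam

/-- A symmetric `(v,k,λ)` design is nontrivial if `2 < k < v - 2`. -/
def NontrivialDesign (v k : ℕ) : Prop := 2 < k ∧ k + 2 < v

/-- The action of `G` on points and blocks preserves the incidence relation,
i.e. `G` acts by automorphisms of the design. -/
def ActsOnDesign (G : Type*) [Group G] {P B : Type*} [MulAction G P] [MulAction G B]
    (I : P → B → Prop) : Prop :=
  ∀ (g : G) (x : P) (b : B), I (g • x) (g • b) ↔ I x b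

/-- `G` is transitive on incident point–block pairs (flags). -/
def IsFlagTransitive (G : Type*) [Group G] {P B : Type*} [MulAction G P] [MulAction G B]
    (I : P → B → Prop) : Prop :=
  ∀ (x x' : P) (b b' : B), I x b → I x' b' → ∃ g : G, g • x = x' ∧ g • b = b'

/-- `G` acts primitively on the points: transitively, and every block (of imprimitivity)
is trivial. -/
def IsPointPrimitive (G : Type*) [Group G] (P : Type*) [MulAction G P] : Prop :=
  MulAction.IsPretransitive G P ∧
    ∀ s : Set P, MulAction.IsBlock G s → s.Subsingleton ∨ s = Set.univ

/-! ### Orders of the finite simple groups of Lie type -/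

/-- `|A_{n-1}^ε(q)|`, i.e. `|PSL_n(q)|` for `ε = 1` and `|PSU_n(q)|` for `ε = -1`. -/
def ordPSL (n : ℕ) (ε : ℤ) (q : ℕ) : ℤ :=
  ((q : ℤ) ^ (n * (n - 1) / 2) * ∏ i ∈ Finset.Icc 2 n, ((q : ℤ) ^ i - ε ^ i)) /
    (Int.gcd (n : ℤ) ((q : ℤ) - ε) : ℤ)

/-- `|C_n(q)| = |PSp_{2n}(q)|` (which also equals `|B_n(q)| = |Ω_{2n+1}(q)|`). -/
def ordPSp (n : ℕ) (q : ℕ) : ℤ :=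
  ((q : ℤ) ^ (n ^ 2) * ∏ i ∈ Finset.Icc 1 n, ((q : ℤ) ^ (2 * i) - 1)) /
    (Int.gcd 2 ((q : ℤ) - 1) : ℤ)

/-- `|D_n^ε(q)| = |PΩ_{2n}^ε(q)|`. -/
def ordPOmega (n : ℕ) (ε : ℤ) (q : ℕ) : ℤ :=
  ((q : ℤ) ^ (n * (n - 1)) * ((q : ℤ) ^ n - ε) *
      ∏ i ∈ Finset.Icc 1 (n - 1), ((q : ℤ) ^ (2 * i) - 1)) /
    (Int.gcd 4 ((q : ℤ) ^ n - ε) : ℤ)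

def ord2B2 (q : ℕ) : ℤ := (q:ℤ)^2 * ((q:ℤ)^2 + 1) * ((q:ℤ) - 1)
def ord2G2 (q : ℕ) : ℤ := (q:ℤ)^3 * ((q:ℤ)^3 + 1) * ((q:ℤ) - 1)
def ord3D4 (q : ℕ) : ℤ := (q:ℤ)^12 * ((q:ℤ)^8 + (q:ℤ)^4 + 1) * ((q:ℤ)^6 - 1) * ((q:ℤ)^2 - 1)
def ord2F4 (q : ℕ) : ℤ :=
  (q:ℤ)^12 * ((q:ℤ)^6 + 1) * ((q:ℤ)^4 - 1) * ((q:ℤ)^3 + 1) * ((q:ℤ) - 1)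
def ordG2 (q : ℕ) : ℤ := (q:ℤ)^6 * ((q:ℤ)^6 - 1) * ((q:ℤ)^2 - 1)
def ordF4 (q : ℕ) : ℤ :=
  (q:ℤ)^24 * ((q:ℤ)^12 - 1) * ((q:ℤ)^8 - 1) * ((q:ℤ)^6 - 1) * ((q:ℤ)^2 - 1)
def ordE6 (ε : ℤ) (q : ℕ) : ℤ :=
  ((q:ℤ)^36 * ((q:ℤ)^12 - 1) * ((q:ℤ)^9 - ε) * ((q:ℤ)^8 - 1) * ((q:ℤ)^6 - 1) *
      ((q:ℤ)^5 - ε) * ((q:ℤ)^2 - 1)) / (Int.gcd 3 ((q:ℤ) - ε) : ℤ)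
def ordE7 (q : ℕ) : ℤ :=
  ((q:ℤ)^63 * ((q:ℤ)^18 - 1) * ((q:ℤ)^14 - 1) * ((q:ℤ)^12 - 1) * ((q:ℤ)^10 - 1) *
      ((q:ℤ)^8 - 1) * ((q:ℤ)^6 - 1) * ((q:ℤ)^2 - 1)) / (Int.gcd 2 ((q:ℤ) - 1) : ℤ)
def ordE8 (q : ℕ) : ℤ :=
  (q:ℤ)^120 * ((q:ℤ)^30 - 1) * ((q:ℤ)^24 - 1) * ((q:ℤ)^20 - 1) * ((q:ℤ)^18 - 1) *
    ((q:ℤ)^14 - 1) * ((q:ℤ)^12 - 1) * ((q:ℤ)^8 - 1) * ((q:ℤ)^2 - 1)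

/-- `X` is a (finite) simple group of the given order.  By the classification of finite
simple groups, a finite simple group of Lie type is determined up to isomorphism by its
order, with exceptions irrelevant here; we use this to identify the groups of Lie type. -/
def IsSimpleOfOrder (X : Type*) [Group X] (n : ℤ) : Prop :=
  IsSimpleGroup X ∧ (Nat.card X : ℤ) = n

/-- The two signs `ε = ±1`. -/
def pm : Set ℤ := {1, -1}

/-- `X` is a finite simple exceptional group of Lie type in characteristic `p`,
defined over the field with `q` elements. -/
def IsExcLieOfChar (p q : ℕ) (X : Type*) [Group X] : Prop :=
  p.Prime ∧ ∃ a : ℕ, 0 < a ∧ q = p ^ a ∧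
    ((p = 2 ∧ Odd a ∧ 3 ≤ a ∧ IsSimpleOfOrder X (ord2B2 q)) ∨
     (p = 3 ∧ Odd a ∧ 3 ≤ a ∧ IsSimpleOfOrder X (ord2G2 q)) ∨
     (p = 2 ∧ Odd a ∧ 3 ≤ a ∧ IsSimpleOfOrder X (ord2F4 q)) ∨
     IsSimpleOfOrder X (ord3D4 q) ∨
     IsSimpleOfOrder X (ordG2 q) ∨
     IsSimpleOfOrder X (ordF4 q) ∨
     (∃ ε ∈ pm, IsSimpleOfOrder X (ordE6 ε q)) ∨
     IsSimpleOfOrder X (ordE7 q) ∨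
     IsSimpleOfOrder X (ordE8 q))

/-- `X` is a finite simple exceptional group of Lie type. -/
def IsExcLie (X : Type*) [Group X] : Prop := ∃ p q, IsExcLieOfChar p q X

/-- `X` is a finite simple group of Lie type (classical or exceptional)
in characteristic `p`. -/
def IsLieTypeOfChar (p : ℕ) (X : Type*) [Group X] : Prop :=
  p.Prime ∧ ∃ a q : ℕ, 0 < a ∧ q = p ^ a ∧
    ((∃ n, 2 ≤ n ∧ ∃ ε ∈ pm, IsSimpleOfOrder X (ordPSL n ε q)) ∨
     (∃ n, 2 ≤ n ∧ IsSimpleOfOrder X (ordPSp n q)) ∨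
     (∃ n, 4 ≤ n ∧ ∃ ε ∈ pm, IsSimpleOfOrder X (ordPOmega n ε q)) ∨
     (p = 2 ∧ Odd a ∧ IsSimpleOfOrder X (ord2B2 q)) ∨
     (p = 3 ∧ Odd a ∧ IsSimpleOfOrder X (ord2G2 q)) ∨
     (p = 2 ∧ Odd a ∧ IsSimpleOfOrder X (ord2F4 q)) ∨
     IsSimpleOfOrder X (ord3D4 q) ∨
     IsSimpleOfOrder X (ordG2 q) ∨
     IsSimpleOfOrder X (ordF4 q) ∨
     (∃ ε ∈ pm, IsSimpleOfOrder X (ordE6 ε q)) ∨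
     IsSimpleOfOrder X (ordE7 q) ∨
     IsSimpleOfOrder X (ordE8 q))

/-- The order of the subgroup `S` lies between `core` and `c * core` (divisibility on
both sides): `S` has a normal "core" of the given order with quotient of order
dividing `c`.  We use this to express that `S` is "of type" a given Lie subgroup. -/
def cardSandwich {G : Type*} [Group G] (S : Subgroup G) (core : ℤ) (c : ℕ) : Prop :=
  core ∣ (Nat.card S : ℤ) ∧ (Nat.card S : ℤ) ∣ (c : ℤ) * core

/-- The transitive action of `G` on the cosets of `H` has a nontrivial subdegree
(size of an orbit of `H` on `G ⧸ H`) dividing `n`. -/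
def HasSubdegreeDvd {G : Type*} [Group G] (H : Subgroup G) (n : ℕ) : Prop :=
  ∃ x : G ⧸ H, x ≠ ((1 : G) : G ⧸ H) ∧ Nat.card (MulAction.orbit H x) ∣ n



private theorem sylow_key {G Pt : Type*} [Group G] [Finite G] [MulAction G Pt]
    (p : ℕ) (hp : p.Prime) (α : Pt)
    (htrans : MulAction.IsPretransitive G Pt)
    (hnp : ¬ ∃ Q : Sylow p G, (Q : Subgroup G) ≤ MulAction.stabilizer G α) :
    p ∣ Nat.card Pt := by
  haveI : Fact p.Prime := ⟨hp⟩
  haveI : Nonempty Pt := ⟨α⟩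
  haveI : Finite Pt :=
    Finite.of_surjective (fun g : G => g • α) fun x => by
      obtain ⟨g, hg⟩ := htrans.exists_smul_eq α x; exact ⟨g, hg⟩
  set H := MulAction.stabilizer G α with hH
  by_contra hdvd
  apply hnp
  have hidx : H.index = Nat.card Pt := MulAction.index_stabilizer_of_transitive G α
  have hdvd' : ¬ p ∣ H.index := by rw [hidx]; exact hdvd
  obtain ⟨Q⟩ : Nonempty (Sylow p H) := inferInstance
  have hQmap : IsPGroup p ((Q : Subgroup H).map H.subtype) := Q.2.map _
  obtain ⟨R, hQR⟩ := hQmap.exists_le_sylow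
  have hHne : Nat.card H ≠ 0 := Nat.card_pos.ne'
  have hIne : H.index ≠ 0 := by rw [hidx]; exact Nat.card_pos.ne'
  have hfac : (Nat.card G).factorization p = (Nat.card H).factorization p := by
    rw [← H.card_mul_index, Nat.factorization_mul hHne hIne,
      Finsupp.add_apply, Nat.factorization_eq_zero_of_not_dvd hdvd', add_zero]
  have hcardQ : Nat.card ((Q : Subgroup H).map H.subtype) = Nat.card R := by
    rw [Nat.card_congr (Subgroup.equivMapOfInjective _ _ H.subtype_injective).symm.toEquiv,
      Sylow.card_eq_multiplicity, Sylow.card_eq_multiplicity, hfac]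
  have : (Q : Subgroup H).map H.subtype = R :=
    Subgroup.eq_of_le_of_card_ge hQR hcardQ.ge
  exact ⟨R, this ▸ Subgroup.map_subtype_le _⟩

/-- **Lemma 2.2 (Tits' lemma for designs).**  Suppose `D` is a symmetric `(v,k,λ)`
design admitting a flag-transitive, point-primitive almost simple automorphism group `G`
with socle `X` a finite simple group of Lie type in characteristic `p`.  If the point
stabiliser `G_α` does not contain `X` and is not a parabolic subgroup of `G` (that is,
it contains no Sylow `p`-subgroup of `G`), then `gcd(p, v-1) = 1`. -/
theorem tits_design_lemma
    {G Pt Bl : Type*} [Group G] [Finite G] [MulAction G Pt] [MulAction G Bl]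
    [FaithfulSMul G Pt]
    (I : Pt → Bl → Prop) (v k lam : ℕ)
    (hD : IsSymmetricDesign I v k lam)
    (hact : ActsOnDesign G I) (hflag : IsFlagTransitive G I)
    (hprim : IsPointPrimitive G Pt)
    (X : Subgroup G) (hAS : IsAlmostSimpleWithSocle G X)
    (p : ℕ) (hLie : IsLieTypeOfChar p X)
    (α : Pt)
    (hnc : ¬ X ≤ MulAction.stabilizer G α)
    (hnp : ¬ IsParabolic p (MulAction.stabilizer G α)) :
    Nat.gcd p (v - 1) = 1 := by
  obtain ⟨hp, -⟩ := hLie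
  have hpv : p ∣ v := by
    rw [← hD.card_points]
    exact sylow_key p hp α hprim.1 hnp
  have hv : 0 < v := by
    haveI : Nonempty Pt := ⟨α⟩
    haveI : Finite Pt :=
      Finite.of_surjective (fun g : G => g • α) fun x => by
        obtain ⟨g, hg⟩ := hprim.1.exists_smul_eq α x; exact ⟨g, hg⟩
    rw [← hD.card_points]; exact Nat.card_pos
  have hnd : ¬ p ∣ (v - 1) := by
    intro h
    have h1 : p ∣ 1 := by
      have := Nat.dvd_sub hpv h
      rwa [Nat.sub_sub_self hv] at this
    exact hp.one_lt.ne' (Nat.dvd_one.mp h1)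
  exact (Nat.Prime.coprime_iff_not_dvd hp).mpr hnd

end Paper
end

section
/- Let D be a nontrivial symmetric (v, k, λ) design and let G be a flag-transitive automorphism group of D. Then |G| ≤ |G_α|³, where G_α is the stabiliser in G of a point α of D; that is, the point stabiliser is a large subgroup of G. -/
namespace Paper

section AuxLemmas

private lemma card_sub_one {α : Type*} [Finite α] (a : α) :
    Nat.card {x : α // x ≠ a} = Nat.card α - 1 := by
  classical
  cases nonempty_fintype α
  simp only [Nat.card_eq_fintype_card]
  have : Fintype.card {x : α // ¬ x = a} = Fintype.card α - Fintype.card {x : α // x = a} :=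
    Fintype.card_subtype_compl _
  rw [Fintype.card_subtype_eq] at this
  exact this

private lemma count_eq {Pt Bl : Type*} [Finite Pt] [Finite Bl] {I : Pt → Bl → Prop}
    {v k lam : ℕ} (hD : IsSymmetricDesign I v k lam) (x : Pt) :
    Nat.card {b : Bl // I x b} * (k - 1) = lam * (v - 1) := by
  classical
  cases nonempty_fintype Pt; cases nonempty_fintype Bl
  have e : (Σ b : {b : Bl // I x b}, {y : Pt // I y b.1 ∧ y ≠ x}) ≃
      (Σ y : {y : Pt // y ≠ x}, {b : Bl // I x b ∧ I y.1 b}) :=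
    { toFun := fun p => ⟨⟨p.2.1, p.2.2.2⟩, ⟨p.1.1, p.1.2, p.2.2.1⟩⟩
      invFun := fun p => ⟨⟨p.2.1, p.2.2.1⟩, ⟨p.1.1, p.2.2.2, p.1.2⟩⟩
      left_inv := fun p => rfl
      right_inv := fun p => rfl }
  have h1 : ∀ b : {b : Bl // I x b}, Nat.card {y : Pt // I y b.1 ∧ y ≠ x} = k - 1 := by
    intro b
    have e2 : {y : Pt // I y b.1 ∧ y ≠ x} ≃ {z : {y : Pt // I y b.1} // z ≠ ⟨x, b.2⟩} :=
      { toFun := fun y => ⟨⟨y.1, y.2.1⟩, fun h => y.2.2 (congrArg Subtype.val h)⟩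
        invFun := fun z => ⟨z.1.1, z.1.2, fun h => z.2 (Subtype.ext h)⟩
        left_inv := fun y => rfl
        right_inv := fun z => rfl }
    rw [Nat.card_congr e2, card_sub_one, hD.card_block]
  have h2 : ∀ y : {y : Pt // y ≠ x}, Nat.card {b : Bl // I x b ∧ I y.1 b} = lam :=
    fun y => hD.card_pair x y.1 (Ne.symm y.2)
  have hL : Nat.card (Σ b : {b : Bl // I x b}, {y : Pt // I y b.1 ∧ y ≠ x}) =
      Nat.card {b : Bl // I x b} * (k - 1) := by
    calc Nat.card (Σ b : {b : Bl // I x b}, {y : Pt // I y b.1 ∧ y ≠ x})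
        = ∑ b : {b : Bl // I x b}, Nat.card {y : Pt // I y b.1 ∧ y ≠ x} := by
          simp [Nat.card_eq_fintype_card, Fintype.card_sigma]
      _ = ∑ _b : {b : Bl // I x b}, (k - 1) := Finset.sum_congr rfl (fun b _ => h1 b)
      _ = Nat.card {b : Bl // I x b} * (k - 1) := by
          simp [Finset.sum_const, Nat.card_eq_fintype_card, Finset.card_univ]
  have hR : Nat.card (Σ y : {y : Pt // y ≠ x}, {b : Bl // I x b ∧ I y.1 b}) =
      lam * (v - 1) := by
    calc Nat.card (Σ y : {y : Pt // y ≠ x}, {b : Bl // I x b ∧ I y.1 b})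
        = ∑ y : {y : Pt // y ≠ x}, Nat.card {b : Bl // I x b ∧ I y.1 b} := by
          simp [Nat.card_eq_fintype_card, Fintype.card_sigma]
      _ = ∑ _y : {y : Pt // y ≠ x}, lam := Finset.sum_congr rfl (fun y _ => h2 y)
      _ = Nat.card {y : Pt // y ≠ x} * lam := by
          simp [Finset.sum_const, Nat.card_eq_fintype_card, Finset.card_univ]
      _ = lam * (v - 1) := by rw [card_sub_one, hD.card_points, mul_comm]
  rw [← hL, Nat.card_congr e, hR]

end AuxLemmas

/-- **Corollary 2.6.**  Let `D` be a nontrivial symmetric `(v,k,λ)` design and let `G`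
be a flag-transitive automorphism group of `D`.  Then `|G| ≤ |G_α|³` for a point
stabiliser `G_α`, i.e. point stabilisers are large subgroups of `G`. -/
theorem stabilizer_is_large
    {G Pt Bl : Type*} [Group G] [MulAction G Pt] [MulAction G Bl]
    [FaithfulSMul G Pt]
    (I : Pt → Bl → Prop) (v k lam : ℕ)
    (hD : IsSymmetricDesign I v k lam) (hnt : NontrivialDesign v k)
    (hact : ActsOnDesign G I) (hflag : IsFlagTransitive G I)
    (α : Pt) :
    Nat.card G ≤ Nat.card (MulAction.stabilizer G α) ^ 3 := by
  classical
  obtain ⟨hk2, hkv⟩ := hnt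
  have hPtfin : Finite Pt := Nat.finite_of_card_ne_zero (by rw [hD.card_points]; omega)
  have hBlfin : Finite Bl := Nat.finite_of_card_ne_zero (by rw [hD.card_blocks]; omega)
  have hGfin : Finite G := Finite.of_injective _ (MulAction.toPerm_injective (α := G) (β := Pt))
  -- lam ≥ 1
  obtain ⟨b0⟩ : Nonempty Bl := (Nat.card_pos_iff.mp (by rw [hD.card_blocks]; omega)).1
  have h3 : 1 < Nat.card {x : Pt // I x b0} := by rw [hD.card_block]; omega
  have hntr : Nontrivial {x : Pt // I x b0} := Finite.one_lt_card_iff_nontrivial.mp h3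
  obtain ⟨⟨x1, hx1⟩, ⟨x2, hx2⟩, hne⟩ := hntr
  have hx12 : x1 ≠ x2 := fun h => hne (Subtype.ext h)
  have hlam : 1 ≤ lam := by
    rw [← hD.card_pair x1 x2 hx12]
    haveI : Nonempty {b : Bl // I x1 b ∧ I x2 b} := ⟨⟨b0, hx1, hx2⟩⟩
    exact Nat.card_pos
  -- every point lies on a block
  have hrpos : ∀ x : Pt, 0 < Nat.card {b : Bl // I x b} := by
    intro x
    have hcnt := count_eq hD x
    by_contra h
    have h0 : Nat.card {b : Bl // I x b} = 0 := by omega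
    rw [h0, zero_mul] at hcnt
    have : 0 < lam * (v - 1) := Nat.mul_pos hlam (by omega)
    omega
  obtain ⟨bα⟩ : Nonempty {b : Bl // I α b} := (Nat.card_pos_iff.mp (hrpos α)).1
  set s := Nat.card (MulAction.stabilizer G α) with hs
  -- orbit of α is everything
  have horbα : MulAction.orbit G α = Set.univ := by
    ext x
    simp only [Set.mem_univ, iff_true]
    obtain ⟨bx⟩ : Nonempty {b : Bl // I x b} := (Nat.card_pos_iff.mp (hrpos x)).1
    obtain ⟨g, hg1, _⟩ := hflag α x bα.1 bx.1 bα.2 bx.2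
    exact MulAction.mem_orbit_iff.mpr ⟨g, hg1⟩
  have hcardorbα : Nat.card (MulAction.orbit G α) = v := by
    rw [horbα, ← hD.card_points]
    exact Nat.card_congr (Equiv.Set.univ Pt)
  have hos : Nat.card (MulAction.orbit G α) * s = Nat.card G := by
    rw [← Nat.card_prod]
    exact Nat.card_congr (MulAction.orbitProdStabilizerEquivGroup G α)
  have hG : Nat.card G = v * s := by rw [← hos, hcardorbα]
  -- flag orbit
  have horbf : MulAction.orbit G (α, bα.1) = {p : Pt × Bl | I p.1 p.2} := by
    ext p
    constructor
    · rintro ⟨g, rfl⟩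
      exact (hact g α bα.1).mpr bα.2
    · intro hp
      obtain ⟨g, hg1, hg2⟩ := hflag α p.1 bα.1 p.2 bα.2 hp
      exact ⟨g, Prod.ext hg1 hg2⟩
  have hflags : Nat.card {p : Pt × Bl // I p.1 p.2} = v * k := by
    have e : {p : Pt × Bl // I p.1 p.2} ≃ (Σ b : Bl, {x : Pt // I x b}) :=
      { toFun := fun p => ⟨p.1.2, p.1.1, p.2⟩
        invFun := fun q => ⟨(q.2.1, q.1), q.2.2⟩
        left_inv := fun p => rfl
        right_inv := fun q => rfl }
    rw [Nat.card_congr e]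
    cases nonempty_fintype Pt; cases nonempty_fintype Bl
    calc Nat.card (Σ b : Bl, {x : Pt // I x b})
        = ∑ b : Bl, Nat.card {x : Pt // I x b} := by
          simp [Nat.card_eq_fintype_card, Fintype.card_sigma]
      _ = ∑ _b : Bl, k := Finset.sum_congr rfl (fun b _ => hD.card_block b)
      _ = v * k := by
          rw [Finset.sum_const, Finset.card_univ, ← Nat.card_eq_fintype_card,
            hD.card_blocks, smul_eq_mul]
  have horbfcard : Nat.card (MulAction.orbit G (α, bα.1)) = v * k := by
    rw [horbf]; exact hflags
  have hosf : Nat.card (MulAction.orbit G (α, bα.1)) *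
      Nat.card (MulAction.stabilizer G (α, bα.1)) = Nat.card G := by
    rw [← Nat.card_prod]
    exact Nat.card_congr (MulAction.orbitProdStabilizerEquivGroup G (α, bα.1))
  -- k ≤ s
  have hstabpos : 0 < Nat.card (MulAction.stabilizer G (α, bα.1)) := Nat.card_pos
  have hv0 : 0 < v := by omega
  have hks : k ≤ s := by
    have h := hosf
    rw [horbfcard, hG] at h
    have h2 : v * (k * Nat.card (MulAction.stabilizer G (α, bα.1))) = v * s := by
      rw [← mul_assoc]; exact h
    have h3 : k * Nat.card (MulAction.stabilizer G (α, bα.1)) = s :=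
      Nat.eq_of_mul_eq_mul_left hv0 h2
    calc k ≤ k * Nat.card (MulAction.stabilizer G (α, bα.1)) :=
          Nat.le_mul_of_pos_right k hstabpos
      _ = s := h3
  -- r_α ≤ s
  have horbB : MulAction.orbit (MulAction.stabilizer G α) bα.1 = {b : Bl | I α b} := by
    ext b
    constructor
    · rintro ⟨⟨g, hg⟩, rfl⟩
      show I α (g • bα.1)
      have hI := (hact g α bα.1).mpr bα.2
      rwa [show g • α = α from hg] at hI
    · intro hb
      obtain ⟨g, hg1, hg2⟩ := hflag α α bα.1 b bα.2 hb
      exact ⟨⟨g, hg1⟩, hg2⟩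
  have hras : Nat.card {b : Bl // I α b} ≤ s := by
    have h1 : Nat.card (MulAction.orbit (MulAction.stabilizer G α) bα.1) *
        Nat.card (MulAction.stabilizer (MulAction.stabilizer G α) bα.1) =
        Nat.card (MulAction.stabilizer G α) := by
      rw [← Nat.card_prod]
      exact Nat.card_congr (MulAction.orbitProdStabilizerEquivGroup _ bα.1)
    have h2 : Nat.card (MulAction.orbit (MulAction.stabilizer G α) bα.1) =
        Nat.card {b : Bl // I α b} := by
      rw [horbB]
      rfl
    rw [← h2]
    exact Nat.le_of_dvd Nat.card_pos ⟨_, h1.symm⟩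
  -- final arithmetic
  have hmain := count_eq hD α
  have hchain : v - 1 ≤ s * (s - 1) := by
    calc v - 1 ≤ lam * (v - 1) := Nat.le_mul_of_pos_left _ hlam
      _ = Nat.card {b : Bl // I α b} * (k - 1) := hmain.symm
      _ ≤ s * (k - 1) := Nat.mul_le_mul_right _ hras
      _ ≤ s * (s - 1) := Nat.mul_le_mul_left _ (Nat.sub_le_sub_right hks 1)
  have hs3 : 3 ≤ s := le_trans (by omega) hks
  have hss : s * (s - 1) + s = s * s := by
    have h1 : s - 1 + 1 = s := by omega
    calc s * (s - 1) + s = s * ((s - 1) + 1) := (Nat.mul_succ s (s - 1)).symm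
      _ = s * s := by rw [h1]
  have hvs : v ≤ s * s := by
    calc v = (v - 1) + 1 := by omega
      _ ≤ s * (s - 1) + 1 := Nat.add_le_add_right hchain 1
      _ ≤ s * (s - 1) + s := Nat.add_le_add_left (by omega) _
      _ = s * s := hss
  rw [hG]
  calc v * s ≤ (s * s) * s := Nat.mul_le_mul_right s hvs
    _ = s ^ 3 := by ring


end Paper
end

section
/- Let D be a symmetric (v, k, λ) design with k ≤ v/2, and suppose mk = λd for positive integers m and d, where d divides v−1. Then: (a) m divides k−1, and hence gcd(m, k) = 1; (b) λ = λ₁λ₂, where λ₁ = gcd(λ, k−1) and λ₂ = gcd(λ, k); (c) setting k₁ = (k−1)/λ₁ and k₂ = k/λ₂, the integer k₂ divides d and λ₁ divides m; moreover λ₁ < k₂/2, gcd(k₁, k₂) = 1 and gcd(λ₁, k₂) = 1. -/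
namespace Paper

open Finset in
private lemma count_aux {Pt Bl : Type*} [Fintype Pt] [Fintype Bl] [DecidableEq Pt]
    {I : Pt → Bl → Prop} [∀ x b, Decidable (I x b)] {v k lam : ℕ}
    (hD : IsSymmetricDesign I v k lam) (x : Pt) :
    lam * (v - 1) = (univ.filter fun b => I x b).card * (k - 1) := by
  have hPt : Fintype.card Pt = v := by
    rw [← Nat.card_eq_fintype_card]; exact hD.card_points
  have hblock : ∀ b : Bl, (univ.filter fun p => I p b).card = k := by
    intro b
    have h := hD.card_block b
    rwa [Nat.card_eq_fintype_card, Fintype.card_subtype] at h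
  have hpair : ∀ y : Pt, x ≠ y →
      (univ.filter fun b => I x b ∧ I y b).card = lam := by
    intro y hxy
    have h := hD.card_pair x y hxy
    rwa [Nat.card_eq_fintype_card, Fintype.card_subtype] at h
  have h1 : ∑ y ∈ univ.erase x, (univ.filter fun b => I x b ∧ I y b).card
      = lam * (v - 1) := by
    rw [Finset.sum_congr rfl fun y hy => hpair y (Finset.ne_of_mem_erase hy).symm,
      Finset.sum_const, smul_eq_mul, Finset.card_erase_of_mem (Finset.mem_univ x),
      Finset.card_univ, hPt, mul_comm]
  have h2 : ∑ y ∈ univ.erase x, (univ.filter fun b => I x b ∧ I y b).card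
      = ∑ b ∈ univ.filter (fun b => I x b), ((univ.erase x).filter fun y => I y b).card := by
    simp only [Finset.card_filter, Finset.sum_filter]
    rw [Finset.sum_comm]
    refine Finset.sum_congr rfl fun b _ => ?_
    by_cases h : I x b <;> simp [h]
  have h3 : ∀ b ∈ univ.filter (fun b => I x b),
      ((univ.erase x).filter fun y => I y b).card = k - 1 := by
    intro b hb
    have hxb : I x b := (Finset.mem_filter.mp hb).2
    rw [Finset.filter_erase, Finset.card_erase_of_mem (by simp [hxb]), hblock b]
  rw [← h1, h2, Finset.sum_congr rfl h3, Finset.sum_const, smul_eq_mul]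

open Finset in
private lemma design_eq {Pt Bl : Type*} [Fintype Pt] [Fintype Bl] [DecidableEq Pt]
    {I : Pt → Bl → Prop} [∀ x b, Decidable (I x b)] {v k lam : ℕ}
    (hD : IsSymmetricDesign I v k lam) (hv : 0 < v) (hk : 2 ≤ k) :
    lam * (v - 1) = k * (k - 1) := by
  have hPt : Fintype.card Pt = v := by
    rw [← Nat.card_eq_fintype_card]; exact hD.card_points
  have hblock : ∀ b : Bl, (univ.filter fun p => I p b).card = k := by
    intro b
    have h := hD.card_block b
    rwa [Nat.card_eq_fintype_card, Fintype.card_subtype] at h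
  have hne : Nonempty Pt := by
    rw [← Fintype.card_pos_iff, hPt]; exact hv
  obtain ⟨x₀⟩ := hne
  set r := (univ.filter fun b => I x₀ b).card with hrdef
  have hr : ∀ x : Pt, (univ.filter fun b => I x b).card = r := by
    intro x
    have h := (count_aux hD x).symm.trans (count_aux hD x₀)
    exact Nat.eq_of_mul_eq_mul_right (by omega) h
  have hflag : ∑ x : Pt, (univ.filter fun b => I x b).card
      = ∑ b : Bl, (univ.filter fun p => I p b).card := by
    simp only [Finset.card_filter]
    exact Finset.sum_comm
  have hL : ∑ x : Pt, (univ.filter fun b => I x b).card = v * r := by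
    rw [Finset.sum_congr rfl fun x _ => hr x, Finset.sum_const, smul_eq_mul,
      Finset.card_univ, hPt]
  have hBl : Fintype.card Bl = v := by
    rw [← Nat.card_eq_fintype_card]; exact hD.card_blocks
  have hR : ∑ b : Bl, (univ.filter fun p => I p b).card = v * k := by
    rw [Finset.sum_congr rfl fun b _ => hblock b, Finset.sum_const, smul_eq_mul,
      Finset.card_univ, hBl]
  have hrk : r = k := Nat.eq_of_mul_eq_mul_left hv (by rw [← hL, hflag, hR])
  rw [count_aux hD x₀, ← hrdef, hrk]

private lemma arith_aux (v k lam m d : ℕ) (hkv : 2 * k ≤ v) (hm : 0 < m) (hd : 0 < d)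
    (hlam : 0 < lam) (hk : 2 ≤ k) (hdvd : d ∣ v - 1) (hmk : m * k = lam * d)
    (E : lam * (v - 1) = k * (k - 1)) :
    (m ∣ k - 1 ∧ Nat.gcd m k = 1) ∧
    (lam = Nat.gcd lam (k - 1) * Nat.gcd lam k) ∧
    (k / Nat.gcd lam k ∣ d ∧
     Nat.gcd lam (k - 1) ∣ m ∧
     2 * Nat.gcd lam (k - 1) < k / Nat.gcd lam k ∧
     Nat.gcd ((k - 1) / Nat.gcd lam (k - 1)) (k / Nat.gcd lam k) = 1 ∧
     Nat.gcd (Nat.gcd lam (k - 1)) (k / Nat.gcd lam k) = 1) := by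
  have hk0 : 0 < k := by omega
  obtain ⟨e, he⟩ := hdvd
  have copk : Nat.Coprime (k - 1) k := by
    have h : k - 1 + 1 = k := by omega
    have hc := Nat.coprime_add_self_right.mpr (Nat.coprime_one_right (k - 1))
    rw [Nat.add_comm] at hc
    rwa [h] at hc
  -- (a)
  have h1 : m * e = k - 1 := by
    have h : (m * e) * k = (k - 1) * k := by
      calc (m * e) * k = (m * k) * e := by ring
        _ = (lam * d) * e := by rw [hmk]
        _ = lam * (d * e) := by ring
        _ = lam * (v - 1) := by rw [← he]
        _ = k * (k - 1) := E
        _ = (k - 1) * k := by ring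
    exact Nat.eq_of_mul_eq_mul_right hk0 h
  have ma : m ∣ k - 1 := ⟨e, h1.symm⟩
  have copmk : Nat.gcd m k = 1 := Nat.Coprime.coprime_dvd_left ma copk
  -- (b)
  have lamdvd : lam ∣ (k - 1) * k := ⟨v - 1, by rw [E]; ring⟩
  have hb : Nat.gcd lam (k - 1) * Nat.gcd lam k = lam :=
    (Nat.gcd_mul_gcd_eq_iff_dvd_mul_of_coprime copk).mpr lamdvd
  set l1 := Nat.gcd lam (k - 1) with hl1
  set l2 := Nat.gcd lam k with hl2
  set k2 := k / l2 with hk2def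
  set k1 := (k - 1) / l1 with hk1def
  have hl2pos : 0 < l2 := Nat.gcd_pos_of_pos_left _ hlam
  have hl1pos : 0 < l1 := Nat.gcd_pos_of_pos_left _ hlam
  have hkk2 : l2 * k2 = k := Nat.mul_div_cancel' (Nat.gcd_dvd_right lam k)
  have hkk1 : l1 * k1 = k - 1 := Nat.mul_div_cancel' (Nat.gcd_dvd_right lam (k - 1))
  have hk2dvd : k2 ∣ k := ⟨l2, by rw [← hkk2]; ring⟩
  have hk1dvd : k1 ∣ k - 1 := ⟨l1, by rw [← hkk1]; ring⟩
  have hl1dvd : l1 ∣ k - 1 := Nat.gcd_dvd_right lam (k - 1)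
  have cop12 : Nat.Coprime l1 k2 :=
    Nat.Coprime.coprime_dvd_right hk2dvd (Nat.Coprime.coprime_dvd_left hl1dvd copk)
  have copk12 : Nat.Coprime k1 k2 :=
    Nat.Coprime.coprime_dvd_right hk2dvd (Nat.Coprime.coprime_dvd_left hk1dvd copk)
  -- key equation m * k2 = l1 * d
  have key : m * k2 = l1 * d := by
    have h : l2 * (m * k2) = l2 * (l1 * d) := by
      calc l2 * (m * k2) = m * (l2 * k2) := by ring
        _ = m * k := by rw [hkk2]
        _ = lam * d := hmk
        _ = (l1 * l2) * d := by rw [hb]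
        _ = l2 * (l1 * d) := by ring
    exact Nat.eq_of_mul_eq_mul_left hl2pos h
  have hk2d : k2 ∣ d := by
    have h : k2 ∣ l1 * d := ⟨m, by rw [← key]; ring⟩
    exact (Nat.Coprime.dvd_of_dvd_mul_left (Nat.Coprime.symm cop12) h)
  have hl1m : l1 ∣ m := by
    have h : l1 ∣ m * k2 := ⟨d, key⟩
    exact Nat.Coprime.dvd_of_dvd_mul_right cop12 h
  -- strict inequality 2 * k < v
  have hvk : 2 * k < v := by
    rcases lt_or_eq_of_le hkv with h | h
    · exact h
    · exfalso
      have hv1 : v - 1 = 2 * k - 1 := by omega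
      have c1 : Nat.Coprime (2 * k - 1) k := by
        have h2 : (k - 1) + k = 2 * k - 1 := by omega
        have hc := Nat.coprime_add_self_left.mpr copk
        rwa [h2] at hc
      have c2 : Nat.Coprime (2 * k - 1) (k - 1) := by
        have h2 : k + (k - 1) = 2 * k - 1 := by omega
        have hc := Nat.coprime_add_self_left.mpr copk.symm
        rwa [h2] at hc
      have c : Nat.Coprime (2 * k - 1) ((k - 1) * k) := Nat.Coprime.mul_right c2 c1
      have dv : (2 * k - 1) ∣ (k - 1) * k := by
        refine ⟨lam, ?_⟩
        have hE := E
        rw [hv1] at hE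
        calc (k - 1) * k = k * (k - 1) := Nat.mul_comm _ _
          _ = lam * (2 * k - 1) := hE.symm
          _ = (2 * k - 1) * lam := Nat.mul_comm _ _
      have : (2 * k - 1) ∣ 1 := by
        have := Nat.dvd_gcd (dvd_refl (2 * k - 1)) dv
        rwa [c] at this
      have := Nat.le_of_dvd one_pos this
      omega
  have h2lam : 2 * lam < k := by
    have hle : lam * (2 * k) ≤ lam * (v - 1) := Nat.mul_le_mul_left lam (by omega)
    rw [E] at hle
    have h : (2 * lam) * k ≤ (k - 1) * k := by
      calc (2 * lam) * k = lam * (2 * k) := by ring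
        _ ≤ (k - 1) * k := by rw [mul_comm (k-1) k]; exact hle
    have := Nat.le_of_mul_le_mul_right h hk0
    omega
  have hineq : 2 * l1 < k2 := by
    have h : l2 * (2 * l1) < l2 * k2 := by
      calc l2 * (2 * l1) = 2 * (l1 * l2) := by ring
        _ = 2 * lam := by rw [hb]
        _ < k := h2lam
        _ = l2 * k2 := hkk2.symm
    exact Nat.lt_of_mul_lt_mul_left h
  exact ⟨⟨ma, copmk⟩, hb.symm, hk2d, hl1m, hineq, copk12, cop12⟩

/-- **Lemma 2.7.**  Let `D` be a symmetric `(v,k,λ)` design with `k ≤ v/2` and suppose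
`m·k = λ·d` for positive integers `m, d` with `d ∣ v - 1`.  Writing
`λ₁ = gcd(λ, k-1)`, `λ₂ = gcd(λ, k)`, `k₁ = (k-1)/λ₁` and `k₂ = k/λ₂`, we have:
(a) `m ∣ k - 1` and `gcd(m,k) = 1`; (b) `λ = λ₁λ₂`; (c) `k₂ ∣ d`, `λ₁ ∣ m`,
`λ₁ < k₂/2`, `gcd(k₁,k₂) = 1` and `gcd(λ₁,k₂) = 1`. -/
theorem design_parameter_divisibility
    {Pt Bl : Type*} (I : Pt → Bl → Prop) (v k lam m d : ℕ)
    (hD : IsSymmetricDesign I v k lam)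
    (hkv : 2 * k ≤ v) (hm : 0 < m) (hd : 0 < d) (hlam : 0 < lam)
    (hdvd : d ∣ v - 1) (hmk : m * k = lam * d) :
    (m ∣ k - 1 ∧ Nat.gcd m k = 1) ∧
    (lam = Nat.gcd lam (k - 1) * Nat.gcd lam k) ∧
    (k / Nat.gcd lam k ∣ d ∧
     Nat.gcd lam (k - 1) ∣ m ∧
     2 * Nat.gcd lam (k - 1) < k / Nat.gcd lam k ∧
     Nat.gcd ((k - 1) / Nat.gcd lam (k - 1)) (k / Nat.gcd lam k) = 1 ∧
     Nat.gcd (Nat.gcd lam (k - 1)) (k / Nat.gcd lam k) = 1) := by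
  classical
  have hk0 : 0 < k := by
    rcases Nat.eq_zero_or_pos k with h | h
    · subst h
      simp only [Nat.mul_zero] at hmk
      have := Nat.mul_pos hlam hd
      omega
    · exact h
  have hv2 : 2 ≤ v := by omega
  have hPtfin : Finite Pt := Nat.finite_of_card_ne_zero (by rw [hD.card_points]; omega)
  have hBlfin : Finite Bl := Nat.finite_of_card_ne_zero (by rw [hD.card_blocks]; omega)
  letI := Fintype.ofFinite Pt
  letI := Fintype.ofFinite Bl
  have hne : Nonempty Pt := by
    rw [← Fintype.card_pos_iff, ← Nat.card_eq_fintype_card, hD.card_points]; omega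
  have hk2 : 2 ≤ k := by
    by_contra h
    have hk1 : k = 1 := by omega
    obtain ⟨x₀⟩ := hne
    have hc := count_aux hD x₀
    rw [hk1] at hc
    simp only [Nat.sub_self, Nat.mul_zero] at hc
    rcases Nat.mul_eq_zero.mp hc with h' | h' <;> omega
  have E : lam * (v - 1) = k * (k - 1) := design_eq hD (by omega) hk2
  exact arith_aux v k lam m d hkv hm hd hlam hk2 hdvd hmk E

end Paper
end
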